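/- Let r, r′: ℝ²→ℝ² be continuously differentiable vector fields and let ℓ⊂ℝ² be a line. If r(x) = r′(x) for all x∈ℓ and Curl^s r(x) = Curl^s r′(x) for all x∈ℓ, then the total derivatives agree on the line: Dr(x) = Dr′(x) for every x∈ℓ. -/

import Mathlib

open Matrix

/-- `Curl φ` of a vector field `φ : ℝ² → ℝ²`: the 2×2 matrix field whose `i`-th
row is `(curl φ_i)ᵀ = (−∂_{x₂} φ_i, ∂_{x₁} φ_i)`. -/
noncomputable def Curl (r : (Fin 2 → ℝ) → Fin 2 → ℝ) (x : Fin 2 → ℝ) :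
    Matrix (Fin 2) (Fin 2) ℝ :=
  Matrix.of fun i j =>
    if j = 0 then -(fderiv ℝ r x ![0, 1] i) else fderiv ℝ r x ![1, 0] i

/-- The symmetric part `Curl^s φ = (Curl φ + (Curl φ)ᵀ)/2`. -/
noncomputable def CurlS (r : (Fin 2 → ℝ) → Fin 2 → ℝ) (x : Fin 2 → ℝ) :
    Matrix (Fin 2) (Fin 2) ℝ :=
  (2⁻¹ : ℝ) • (Curl r x + (Curl r x)ᵀ)

lemma clm_apply_eq (L : (Fin 2 → ℝ) →L[ℝ] (Fin 2 → ℝ)) (y : Fin 2 → ℝ) :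
    L y = y 0 • L ![1, 0] + y 1 • L ![0, 1] := by
  rw [← L.map_smul, ← L.map_smul, ← map_add]
  congr 1
  funext i; fin_cases i <;> simp

/-- If two continuously differentiable vector fields `r, r' : ℝ² → ℝ²` agree on a
line `ℓ = {a + s v : s ∈ ℝ}` (with `v ≠ 0`) and their symmetric curls agree on `ℓ`,
then their total derivatives agree on `ℓ`. -/
theorem jacobians_agree_on_line_of_curlS_agree
    (r r' : (Fin 2 → ℝ) → Fin 2 → ℝ)
    (hr : ContDiff ℝ 1 r) (hr' : ContDiff ℝ 1 r')
    (a v : Fin 2 → ℝ) (hv : v ≠ 0)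
    (hval : ∀ s : ℝ, r (a + s • v) = r' (a + s • v))
    (hcurl : ∀ s : ℝ, CurlS r (a + s • v) = CurlS r' (a + s • v)) :
    ∀ s : ℝ, fderiv ℝ r (a + s • v) = fderiv ℝ r' (a + s • v) := by
  intro s
  have hdr : Differentiable ℝ r := hr.differentiable one_ne_zero
  have hdr' : Differentiable ℝ r' := hr'.differentiable one_ne_zero
  set x := a + s • v with hxdef
  set L := fderiv ℝ r x with hLdef
  set L' := fderiv ℝ r' x with hL'def
  -- directional derivative along v agrees
  have hA : L v = L' v := by
    have hc : HasDerivAt (fun t : ℝ => a + t • v) v s := by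
      simpa using ((hasDerivAt_id s).smul_const v).const_add a
    have h1 : HasDerivAt (fun t : ℝ => r (a + t • v)) (L v) s :=
      (hdr x).hasFDerivAt.comp_hasDerivAt s hc
    have h2 : HasDerivAt (fun t : ℝ => r' (a + t • v)) (L' v) s :=
      (hdr' x).hasFDerivAt.comp_hasDerivAt s hc
    have hfun : (fun t : ℝ => r (a + t • v)) = fun t : ℝ => r' (a + t • v) :=
      funext fun t => hval t
    rw [hfun] at h1
    exact h1.unique h2
  have hC := hcurl s
  have hb : L ![0, 1] 0 = L' ![0, 1] 0 := by
    have h00 := congrArg (fun M : Matrix (Fin 2) (Fin 2) ℝ => M 0 0) hC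
    simp [CurlS, Curl, Matrix.smul_apply, Matrix.add_apply, Matrix.transpose_apply,
      ← hLdef, ← hL'def] at h00
    linarith
  have hcc : L ![1, 0] 1 = L' ![1, 0] 1 := by
    have h11 := congrArg (fun M : Matrix (Fin 2) (Fin 2) ℝ => M 1 1) hC
    simp [CurlS, Curl, Matrix.smul_apply, Matrix.add_apply, Matrix.transpose_apply,
      ← hLdef, ← hL'def] at h11
    linarith
  have had : L ![1, 0] 0 - L ![0, 1] 1 = L' ![1, 0] 0 - L' ![0, 1] 1 := by
    have h01 := congrArg (fun M : Matrix (Fin 2) (Fin 2) ℝ => M 0 1) hC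
    simp [CurlS, Curl, Matrix.smul_apply, Matrix.add_apply, Matrix.transpose_apply,
      ← hLdef, ← hL'def] at h01
    linarith
  -- the common diagonal defect
  set α := L ![1, 0] 0 - L' ![1, 0] 0 with hα
  have hα2 : L ![0, 1] 1 - L' ![0, 1] 1 = α := by rw [hα]; linarith
  have hAv := hA
  rw [clm_apply_eq L v, clm_apply_eq L' v] at hAv
  have h0 := congrFun hAv 0
  have h1 := congrFun hAv 1
  simp [Pi.add_apply, Pi.smul_apply, smul_eq_mul] at h0 h1
  have hv0α : v 0 * α = 0 := by
    have hb' : v 1 * L ![0, 1] 0 = v 1 * L' ![0, 1] 0 := by rw [hb]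
    rw [hα]; linear_combination h0 - hb'
  have hv1α : v 1 * α = 0 := by
    have hcc' : v 0 * L ![1, 0] 1 = v 0 * L' ![1, 0] 1 := by rw [hcc]
    rw [← hα2]; linear_combination h1 - hcc'
  have hvne : v 0 ≠ 0 ∨ v 1 ≠ 0 := by
    by_contra h
    push_neg at h
    exact hv (funext fun i => by fin_cases i <;> simp [h.1, h.2])
  have hα0 : α = 0 := by
    rcases hvne with h | h
    · exact (mul_eq_zero.mp hv0α).resolve_left h
    · exact (mul_eq_zero.mp hv1α).resolve_left h
  have he1 : L ![1, 0] = L' ![1, 0] := by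
    have h00 : L ![1, 0] 0 = L' ![1, 0] 0 := by
      have : L ![1, 0] 0 - L' ![1, 0] 0 = 0 := by rw [← hα]; exact hα0
      linarith
    funext i; fin_cases i
    · exact h00
    · exact hcc
  have he2 : L ![0, 1] = L' ![0, 1] := by
    have h11 : L ![0, 1] 1 = L' ![0, 1] 1 := by
      have : L ![0, 1] 1 - L' ![0, 1] 1 = 0 := by rw [hα2]; exact hα0
      linarith
    funext i; fin_cases i
    · exact hb
    · exact h11
  refine ContinuousLinearMap.ext fun y => ?_
  rw [clm_apply_eq L y, clm_apply_eq L' y, he1, he2]
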